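/- Let G be a valued group and let f, g ∈ G with f ≺ g. Then ⁅f,g⁆ ≺ g, where ⁅f,g⁆ := f⁻¹*g⁻¹*f*g. (Consequently, whenever f and g are not ≍-equivalent, the commutator ⁅f,g⁆ is strictly smaller than the maximum of f and g for ⪯.) -/
import Mathlib


variable {G : Type*} [Group G]

/-- `f ≺ g` : strict part of the dominance relation. -/
def vlt (le : G → G → Prop) (f g : G) : Prop := le f g ∧ ¬ le g f

/-- `f ≍ g` : equivalence induced by the dominance relation. -/
def veq (le : G → G → Prop) (f g : G) : Prop := le f g ∧ le g f

/-- A dominance relation on a group `G`, making it a valued group: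
a reflexive, transitive, total relation satisfying D1-D4. -/
structure IsValuation (le : G → G → Prop) : Prop where
  refl : ∀ f : G, le f f
  trans : ∀ f g h : G, le f g → le g h → le f h
  total : ∀ f g : G, le f g ∨ le g f
  d1 : ∀ f : G, f ≠ 1 → vlt le 1 f
  d2 : ∀ f g : G, le (f * g) f ∨ le (f * g) g
  d3 : ∀ f g h : G, le f g → le (h * f * h⁻¹) (h * g * h⁻¹)
  d4 : ∀ f : G, veq le f f⁻¹

/-- If `f ≺ g` then the commutator `⁅f,g⁆ = f⁻¹*g⁻¹*f*g` satisfies `⁅f,g⁆ ≺ g`. -/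
theorem commutator_vlt_of_vlt (le : G → G → Prop) (hv : IsValuation le)
    (f g : G) (h : vlt le f g) :
    vlt le (f⁻¹ * g⁻¹ * f * g) g := by
  obtain ⟨hfg, hngf⟩ := h
  -- f⁻¹ ≺ g
  have hinv : vlt le f⁻¹ g := by
    refine ⟨hv.trans _ _ _ (hv.d4 f).2 hfg, fun hc => hngf (hv.trans _ _ _ hc (hv.d4 f).2)⟩
  -- g⁻¹ * f * g ≺ g
  have hconj : vlt le (g⁻¹ * f * g) g := by
    constructor
    · have := hv.d3 f g g⁻¹ hfg
      simpa [mul_assoc] using this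
    · intro hc
      have := hv.d3 _ _ g hc
      have h2 : le g f := by
        have e : g * (g⁻¹ * f * g) * g⁻¹ = f := by group
        have e2 : g * g * g⁻¹ = g := by group
        rw [e, e2] at this
        exact this
      exact hngf h2
  -- split via D2
  have key : le (f⁻¹ * (g⁻¹ * f * g)) f⁻¹ ∨ le (f⁻¹ * (g⁻¹ * f * g)) (g⁻¹ * f * g) :=
    hv.d2 _ _
  have e : f⁻¹ * g⁻¹ * f * g = f⁻¹ * (g⁻¹ * f * g) := by group
  rw [e]
  rcases key with hk | hk
  · exact ⟨hv.trans _ _ _ hk hinv.1, fun hc => hinv.2 (hv.trans _ _ _ hc hk)⟩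
  · exact ⟨hv.trans _ _ _ hk hconj.1, fun hc => hconj.2 (hv.trans _ _ _ hc hk)⟩
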